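/- Let p be an odd prime, let l be an odd integer, let k ≥ 1, and let i_1, …, i_k be integers such that |i_j| is congruent to 0 or 1 modulo 2(p−1) for every 1 ≤ j ≤ k. Then the following two conditions are equivalent. Condition (A): for every 1 ≤ j < k, either 1 < i_j < p·i_{j+1} or p·i_{j+1} < i_j ≤ 0; and for every 0 ≤ t ≤ k−1, either 1 < i_{t+1} < (p−1)(l + i_{t+2} + … + i_k) or (p−1)(l + i_{t+2} + … + i_k) < i_{t+1} ≤ 0. Condition (B): for every 1 ≤ j < k, either 1 < i_j < p·i_{j+1} or p·i_{j+1} < i_j ≤ 0; and either 1 < i_k ≤ (p−1)l or (p−1)l ≤ i_k ≤ 0. -/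
import Mathlib


/-- Rephrasing of the admissibility conditions in the proof of Theorem 6.1 of
Brantner–Mathew (free partition Lie algebras on one odd generator, odd prime `p`). -/
theorem stmt2 (p : ℕ) (hp : Nat.Prime p) (hpodd : Odd p) (l : ℤ) (hl : Odd l)
    (k : ℕ) (hk : 1 ≤ k) (i : ℕ → ℤ)
    (hcong : ∀ j, 1 ≤ j → j ≤ k →
      |i j| % (2 * ((p : ℤ) - 1)) = 0 ∨ |i j| % (2 * ((p : ℤ) - 1)) = 1) :
    ((∀ j, 1 ≤ j → j < k →
        ((1 < i j ∧ i j < (p : ℤ) * i (j + 1)) ∨ ((p : ℤ) * i (j + 1) < i j ∧ i j ≤ 0))) ∧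
      (∀ t, t ≤ k - 1 →
        ((1 < i (t + 1) ∧
            i (t + 1) < ((p : ℤ) - 1) * (l + ∑ j ∈ Finset.Icc (t + 2) k, i j)) ∨
          (((p : ℤ) - 1) * (l + ∑ j ∈ Finset.Icc (t + 2) k, i j) < i (t + 1) ∧
            i (t + 1) ≤ 0))))
    ↔
    ((∀ j, 1 ≤ j → j < k →
        ((1 < i j ∧ i j < (p : ℤ) * i (j + 1)) ∨ ((p : ℤ) * i (j + 1) < i j ∧ i j ≤ 0))) ∧
      ((1 < i k ∧ i k ≤ ((p : ℤ) - 1) * l) ∨ (((p : ℤ) - 1) * l ≤ i k ∧ i k ≤ 0))) := by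
  have hq3 : (3 : ℤ) ≤ (p : ℤ) := by
    have h2 := hp.two_le
    obtain ⟨m, hm⟩ := hpodd
    have : 3 ≤ p := by omega
    exact_mod_cast this
  -- the empty sum at t = k-1
  have hempty : (∑ j ∈ Finset.Icc (k + 1) k, i j) = 0 := by
    rw [Finset.Icc_eq_empty (by omega)]; rfl
  have hk1 : k - 1 + 1 = k := by omega
  have hk2 : k - 1 + 2 = k + 1 := by omega
  constructor
  · rintro ⟨hadm, hexc⟩
    refine ⟨hadm, ?_⟩
    have h := hexc (k - 1) le_rfl
    rw [hk1, hk2, hempty, add_zero] at h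
    rcases h with ⟨h1, h2⟩ | ⟨h1, h2⟩
    · exact Or.inl ⟨h1, le_of_lt h2⟩
    · exact Or.inr ⟨le_of_lt h1, h2⟩
  · rintro ⟨hadm, hlast⟩
    refine ⟨hadm, ?_⟩
    -- rule out equality i k = (p-1) l
    have hne : i k ≠ ((p : ℤ) - 1) * l := by
      intro h
      have hla : Odd |l| := by
        rcases abs_choice l with h' | h' <;> rw [h']
        · exact hl
        · exact hl.neg
      obtain ⟨m, hm⟩ := hla
      have habs : |i k| = ((p : ℤ) - 1) + (2 * ((p : ℤ) - 1)) * m := by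
        rw [h, abs_mul, abs_of_nonneg (by linarith : (0:ℤ) ≤ (p:ℤ) - 1), hm]; ring
      have hmod : |i k| % (2 * ((p : ℤ) - 1)) = (p : ℤ) - 1 := by
        rw [habs, Int.add_mul_emod_self_left]
        exact Int.emod_eq_of_lt (by linarith) (by linarith)
      rcases hcong k hk le_rfl with hc | hc <;> rw [hmod] at hc <;> linarith
    -- strict version at the last index
    have hstrict : (1 < i k ∧ i k < ((p : ℤ) - 1) * l) ∨
        (((p : ℤ) - 1) * l < i k ∧ i k ≤ 0) := by
      rcases hlast with ⟨h1, h2⟩ | ⟨h1, h2⟩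
      · exact Or.inl ⟨h1, lt_of_le_of_ne h2 hne⟩
      · exact Or.inr ⟨lt_of_le_of_ne h1 (fun e => hne e.symm), h2⟩
    -- splitting off the first term of the sum
    have hsum : ∀ t : ℕ, t + 2 ≤ k →
        (∑ j ∈ Finset.Icc (t + 2) k, i j) = i (t + 2) + ∑ j ∈ Finset.Icc (t + 3) k, i j := by
      intro t ht
      rw [← Finset.Ico_add_one_right_eq_Icc, ← Finset.Ico_add_one_right_eq_Icc,
        Finset.sum_eq_sum_Ico_succ_bot (by omega)]
    -- downward induction
    have main : ∀ d t : ℕ, t ≤ k - 1 → k - 1 - t = d →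
        ((1 < i (t + 1) ∧
            i (t + 1) < ((p : ℤ) - 1) * (l + ∑ j ∈ Finset.Icc (t + 2) k, i j)) ∨
          (((p : ℤ) - 1) * (l + ∑ j ∈ Finset.Icc (t + 2) k, i j) < i (t + 1) ∧
            i (t + 1) ≤ 0)) := by
      intro d
      induction d with
      | zero =>
          intro t ht hd
          have : t = k - 1 := by omega
          subst this
          rw [hk1, hk2, hempty, add_zero]
          exact hstrict
      | succ d ih =>
          intro t ht hd
          have ht2 : t + 2 ≤ k := by omega
          have hexc := ih (t + 1) (by omega) (by omega)
          have hadm' := hadm (t + 1) (by omega) (by omega)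
          have e1 : t + 1 + 1 = t + 2 := by omega
          have e2 : t + 1 + 2 = t + 3 := by omega
          rw [e1] at hadm'
          rw [e1, e2] at hexc
          rw [hsum t ht2]
          set a := i (t + 1)
          set b := i (t + 2)
          set S := ∑ j ∈ Finset.Icc (t + 3) k, i j
          have expand : ((p : ℤ) - 1) * (l + (b + S)) =
              ((p : ℤ) - 1) * (l + S) + (((p : ℤ) - 1) * b) := by ring
          have qb : (p : ℤ) * b = b + ((p : ℤ) - 1) * b := by ring
          rcases hadm' with ⟨h1, h2⟩ | ⟨h1, h2⟩
          · -- 1 < a < p b, so b > 0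
            have hb : 0 < b := by nlinarith
            rcases hexc with ⟨h3, h4⟩ | ⟨h3, h4⟩
            · left
              constructor
              · exact h1
              · rw [expand]; linarith [qb]
            · linarith
          · -- p b < a ≤ 0, so b < 0
            have hb : b < 0 := by nlinarith
            rcases hexc with ⟨h3, h4⟩ | ⟨h3, h4⟩
            · linarith
            · right
              constructor
              · rw [expand]; linarith [qb]
              · exact h2
    intro t ht
    exact main (k - 1 - t) t ht rfl
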